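/- The functions m_λ(ξ|a), as λ ranges over all partitions, form a basis of the ring of symmetric functions Λ_R(ξ) as a module over R = Z[a_1, a_2, ...]; indeed the change of basis from {m_λ(ξ)} to {m_λ(ξ|a)} is unitriangular with respect to degree (m_λ(ξ|a) = m_λ(ξ) plus terms m_α(ξ) with |α| < |λ| and coefficients in R). -/

import Mathlib

open MvPolynomial

/-- `ℤ[a_1, a_2, …]`: the variable `X t` is `a_{t+1}`. -/
abbrev ARing : Type := MvPolynomial ℕ ℤ

/-- The parameters `a_t`, with `a_0 = 0`. -/
noncomputable def aval (t : ℕ) : ARing :=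
  if t = 0 then 0 else MvPolynomial.X (t - 1)

/-- The monomial symmetric polynomial `m_λ(ξ)` in `ξ_1, …, ξ_r`. -/
noncomputable def msym {r : ℕ} (l : Fin r → ℕ) : MvPolynomial (Fin r) ARing :=
  ∑ β ∈ Finset.image (fun σ : Equiv.Perm (Fin r) => l ∘ σ) Finset.univ,
    ∏ i, MvPolynomial.X i ^ β i

/-- The double monomial symmetric polynomial `m_λ(ξ|a)`: the symmetrization (sum over
distinct terms) of `∏_i (ξ_i + a_0)(ξ_i + a_1)⋯(ξ_i + a_{λ_i − 1})` with `a_0 = 0`. -/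
noncomputable def dmsym {r : ℕ} (l : Fin r → ℕ) : MvPolynomial (Fin r) ARing :=
  (Finset.image
    (fun σ : Equiv.Perm (Fin r) =>
      ∏ i, ∏ t ∈ Finset.range (l i), (MvPolynomial.X (σ i) + MvPolynomial.C (aval t)))
    Finset.univ).sum id

section Comb
variable {r : ℕ}

/-- Orbit of a tuple under permutations. -/
def Orb (l : Fin r → ℕ) : Finset (Fin r → ℕ) :=
  Finset.image (fun σ : Equiv.Perm (Fin r) => l ∘ σ) Finset.univ

lemma mem_Orb {l g : Fin r → ℕ} : g ∈ Orb l ↔ ∃ σ : Equiv.Perm (Fin r), l ∘ σ = g := by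
  simp [Orb]

lemma comp_mem_Orb (l : Fin r → ℕ) (σ : Equiv.Perm (Fin r)) : l ∘ σ ∈ Orb l :=
  mem_Orb.2 ⟨σ, rfl⟩

lemma self_mem_Orb (l : Fin r → ℕ) : l ∈ Orb l := mem_Orb.2 ⟨1, rfl⟩

lemma mem_Orb_symm {l g : Fin r → ℕ} (h : g ∈ Orb l) : l ∈ Orb g := by
  obtain ⟨σ, rfl⟩ := mem_Orb.1 h
  exact mem_Orb.2 ⟨σ⁻¹, by ext i; simp⟩

lemma mem_Orb_trans {l g h : Fin r → ℕ} (h1 : h ∈ Orb g) (h2 : g ∈ Orb l) : h ∈ Orb l := by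
  obtain ⟨σ, rfl⟩ := mem_Orb.1 h1
  obtain ⟨τ, rfl⟩ := mem_Orb.1 h2
  exact mem_Orb.2 ⟨τ * σ, rfl⟩

lemma sum_of_mem_Orb {l g : Fin r → ℕ} (h : g ∈ Orb l) : ∑ i, g i = ∑ i, l i := by
  obtain ⟨σ, rfl⟩ := mem_Orb.1 h
  exact Equiv.sum_comp σ l

/-- The antitone rearrangement of a tuple. -/
noncomputable def sortA (l : Fin r → ℕ) : Fin r → ℕ :=
  l ∘ Tuple.sort (OrderDual.toDual ∘ l)

lemma sortA_mem_Orb (l : Fin r → ℕ) : sortA l ∈ Orb l := comp_mem_Orb l _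

lemma sortA_antitone (l : Fin r → ℕ) : ∀ i j : Fin r, i ≤ j → sortA l j ≤ sortA l i := by
  intro i j hij
  have := Tuple.monotone_sort (OrderDual.toDual ∘ l) hij
  exact this

lemma eq_sortA_of_antitone_of_mem_Orb {l g : Fin r → ℕ}
    (hg : ∀ i j : Fin r, i ≤ j → g j ≤ g i) (h : g ∈ Orb l) : g = sortA l := by
  obtain ⟨σ, rfl⟩ := mem_Orb.1 h
  have h1 : Monotone ((OrderDual.toDual ∘ l) ∘ σ) := fun i j hij => hg i j hij
  have h2 : Monotone ((OrderDual.toDual ∘ l) ∘ Tuple.sort (OrderDual.toDual ∘ l)) :=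
    Tuple.monotone_sort _
  have := Tuple.unique_monotone h1 h2
  funext i
  exact congrFun this i

lemma sortA_eq_self {l : Fin r → ℕ} (hl : ∀ i j : Fin r, i ≤ j → l j ≤ l i) :
    sortA l = l :=
  (eq_sortA_of_antitone_of_mem_Orb hl (self_mem_Orb l)).symm

lemma mem_Orb_iff_sortA {μ g : Fin r → ℕ} (hμ : ∀ i j : Fin r, i ≤ j → μ j ≤ μ i) :
    g ∈ Orb μ ↔ sortA g = μ := by
  constructor
  · intro h
    exact (eq_sortA_of_antitone_of_mem_Orb hμ (mem_Orb_symm h)).symm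
  · rintro rfl
    exact mem_Orb_symm (sortA_mem_Orb g)

lemma Orb_image_comp (l : Fin r → ℕ) (τ : Equiv.Perm (Fin r)) :
    Finset.image (fun g => g ∘ ⇑τ) (Orb l) = Orb l := by
  ext x
  simp only [Finset.mem_image]
  constructor
  · rintro ⟨g, hg, rfl⟩
    obtain ⟨σ, rfl⟩ := mem_Orb.1 hg
    exact mem_Orb.2 ⟨σ * τ, rfl⟩
  · intro hx
    obtain ⟨σ, rfl⟩ := mem_Orb.1 hx
    exact ⟨l ∘ ⇑(σ * τ⁻¹), mem_Orb.2 ⟨σ * τ⁻¹, rfl⟩, by ext i; simp⟩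

end Comb

section Mono
variable {r : ℕ}

/-- Functions `Fin r → ℕ` as finsupps. -/
noncomputable def toF (β : Fin r → ℕ) : Fin r →₀ ℕ := Finsupp.equivFunOnFinite.symm β

@[simp] lemma toF_apply (β : Fin r → ℕ) (i : Fin r) : toF β i = β i := rfl

lemma toF_inj : Function.Injective (toF (r := r)) := Finsupp.equivFunOnFinite.symm.injective

@[simp] lemma toF_coe (d : Fin r →₀ ℕ) : toF (⇑d) = d := by
  simp [toF]

lemma toF_eq_sum_single (β : Fin r → ℕ) : toF β = ∑ j, Finsupp.single j (β j) := by
  ext i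
  rw [Finsupp.finset_sum_apply]
  simp [Finsupp.single_apply]

lemma prod_X_pow {R : Type*} [CommSemiring R] (β : Fin r → ℕ) :
    (∏ i, (MvPolynomial.X i ^ β i : MvPolynomial (Fin r) R)) = monomial (toF β) 1 := by
  rw [toF_eq_sum_single, monomial_sum_index, C_1, one_mul]
  exact Finset.prod_congr rfl fun i _ => X_pow_eq_monomial

lemma msym_eq (l : Fin r → ℕ) : msym l = ∑ β ∈ Orb l, monomial (toF β) 1 := by
  unfold msym Orb
  exact Finset.sum_congr rfl fun β _ => prod_X_pow β

lemma coeff_msym (l : Fin r → ℕ) (g : Fin r → ℕ) :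
    coeff (toF g) (msym l) = if g ∈ Orb l then 1 else 0 := by
  rw [msym_eq, coeff_sum]
  have h : ∀ β : Fin r → ℕ, (if toF β = toF g then (1 : ARing) else 0)
      = if β = g then 1 else 0 := by
    intro β
    exact if_congr ⟨fun h => toF_inj h, fun h => by rw [h]⟩ rfl rfl
  simp only [coeff_monomial, h]
  exact Finset.sum_ite_eq' (Orb l) g (fun _ => 1)

end Mono

section Sym
variable {r : ℕ}

lemma toF_comp_perm (β : Fin r → ℕ) (σ : Equiv.Perm (Fin r)) :
    toF (β ∘ ⇑σ⁻¹) = Finsupp.mapDomain ⇑σ (toF β) := by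
  ext j
  rw [Finsupp.mapDomain_equiv_apply]
  rfl

lemma sum_orb_symmetric (l : Fin r → ℕ) (H : (Fin r → ℕ) → MvPolynomial (Fin r) ARing)
    (hH : ∀ (τ : Equiv.Perm (Fin r)) (β : Fin r → ℕ), rename ⇑τ (H β) = H (β ∘ ⇑τ⁻¹)) :
    (∑ β ∈ Orb l, H β).IsSymmetric := by
  intro τ
  rw [map_sum]
  simp only [hH]
  have hinj : ∀ x ∈ Orb l, ∀ y ∈ Orb l, x ∘ ⇑τ⁻¹ = y ∘ ⇑τ⁻¹ → x = y := by
    intro x _ y _ h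
    funext i
    have := congrFun h (τ i)
    simpa using this
  calc ∑ x ∈ Orb l, H (x ∘ ⇑τ⁻¹)
      = ∑ x ∈ (Orb l).image (fun g => g ∘ ⇑τ⁻¹), H x := (Finset.sum_image hinj).symm
    _ = ∑ β ∈ Orb l, H β := by rw [Orb_image_comp]

lemma msym_symmetric (l : Fin r → ℕ) : (msym l).IsSymmetric := by
  rw [msym_eq]
  refine sum_orb_symmetric l _ fun τ β => ?_
  rw [rename_monomial, toF_comp_perm]

/-- The distinguished product `∏_j ∏_{t < β j} (X j + a_t)`. -/
noncomputable def dprod (β : Fin r → ℕ) : MvPolynomial (Fin r) ARing :=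
  ∏ j, ∏ t ∈ Finset.range (β j), (MvPolynomial.X j + MvPolynomial.C (aval t))

lemma rename_dprod (τ : Equiv.Perm (Fin r)) (β : Fin r → ℕ) :
    rename ⇑τ (dprod β) = dprod (β ∘ ⇑τ⁻¹) := by
  unfold dprod
  rw [map_prod, ← Equiv.prod_comp τ (fun j => ∏ t ∈ Finset.range ((β ∘ ⇑τ⁻¹) j),
    (MvPolynomial.X j + MvPolynomial.C (aval t)))]
  refine Finset.prod_congr rfl fun i _ => ?_
  rw [map_prod]
  refine Finset.prod_congr (by simp) fun t _ => by simp

/-- Setting all parameters to zero. -/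
noncomputable def killA : MvPolynomial (Fin r) ARing →+* MvPolynomial (Fin r) ℤ :=
  MvPolynomial.map (MvPolynomial.constantCoeff)

lemma killA_dprod (β : Fin r → ℕ) : killA (dprod β) = monomial (toF β) 1 := by
  unfold killA dprod
  rw [map_prod]
  have h1 : ∀ j : Fin r, MvPolynomial.map (MvPolynomial.constantCoeff (σ := ℕ) (R := ℤ))
      (∏ t ∈ Finset.range (β j), (MvPolynomial.X j + MvPolynomial.C (aval t)))
      = MvPolynomial.X j ^ β j := by
    intro j
    rw [map_prod]
    have h2 : ∀ t, MvPolynomial.map (MvPolynomial.constantCoeff (σ := ℕ) (R := ℤ))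
        (MvPolynomial.X (σ := Fin r) j + MvPolynomial.C (aval t)) = MvPolynomial.X j := by
      intro t
      rw [map_add, map_X, map_C]
      have : MvPolynomial.constantCoeff (aval t) = 0 := by
        unfold aval
        split
        · simp
        · simp
      rw [this, map_zero, add_zero]
    simp only [h2]
    rw [Finset.prod_const, Finset.card_range]
  simp only [h1]
  exact prod_X_pow β

lemma dprod_injective : Function.Injective (dprod (r := r)) := by
  intro a b h
  have : (monomial (toF a) (1 : ℤ)) = monomial (toF b) 1 := by
    rw [← killA_dprod, ← killA_dprod, h]
  exact toF_inj (monomial_left_injective one_ne_zero this)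

lemma dmsym_eq (l : Fin r → ℕ) : dmsym l = ∑ β ∈ Orb l, dprod β := by
  unfold dmsym
  have key : ∀ σ : Equiv.Perm (Fin r),
      (∏ i, ∏ t ∈ Finset.range (l i), (MvPolynomial.X (σ i) + MvPolynomial.C (aval t)))
      = dprod (l ∘ ⇑σ⁻¹) := by
    intro σ
    unfold dprod
    rw [← Equiv.prod_comp σ (fun j => ∏ t ∈ Finset.range ((l ∘ ⇑σ⁻¹) j),
      (MvPolynomial.X j + MvPolynomial.C (aval t)))]
    exact Finset.prod_congr rfl fun i _ => by simp
  simp only [key]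
  have himg : Finset.image (fun σ : Equiv.Perm (Fin r) => dprod (l ∘ ⇑σ⁻¹)) Finset.univ
      = Finset.image dprod (Orb l) := by
    rw [show (fun σ : Equiv.Perm (Fin r) => dprod (l ∘ ⇑σ⁻¹))
      = dprod ∘ (fun σ : Equiv.Perm (Fin r) => l ∘ ⇑σ⁻¹) from rfl, ← Finset.image_image]
    congr 1
    unfold Orb
    ext g
    simp only [Finset.mem_image, Finset.mem_univ, true_and]
    exact ⟨fun ⟨σ, h⟩ => ⟨σ⁻¹, h⟩, fun ⟨σ, h⟩ => ⟨σ⁻¹, by simpa using h⟩⟩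
  rw [himg, Finset.sum_image (fun x _ y _ h => dprod_injective h)]
  simp

lemma dmsym_symmetric (l : Fin r → ℕ) : (dmsym l).IsSymmetric := by
  rw [dmsym_eq]
  exact sum_orb_symmetric l _ rename_dprod

end Sym

section Small
variable {r : ℕ}

/-- All monomials of `p` have total degree `< n`. -/
def SmallDeg (p : MvPolynomial (Fin r) ARing) (n : ℕ) : Prop :=
  ∀ d : Fin r →₀ ℕ, n ≤ ∑ i, d i → coeff d p = 0

lemma smallDeg_zero (n : ℕ) : SmallDeg (0 : MvPolynomial (Fin r) ARing) n :=
  fun _ _ => by simp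

lemma smallDeg_mono {p : MvPolynomial (Fin r) ARing} {m n : ℕ} (h : SmallDeg p m)
    (hmn : m ≤ n) : SmallDeg p n := fun d hd => h d (le_trans hmn hd)

lemma smallDeg_add {p q : MvPolynomial (Fin r) ARing} {n : ℕ} (hp : SmallDeg p n)
    (hq : SmallDeg q n) : SmallDeg (p + q) n := fun d hd => by
  rw [coeff_add, hp d hd, hq d hd, add_zero]

lemma smallDeg_sub {p q : MvPolynomial (Fin r) ARing} {n : ℕ} (hp : SmallDeg p n)
    (hq : SmallDeg q n) : SmallDeg (p - q) n := fun d hd => by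
  rw [coeff_sub, hp d hd, hq d hd, sub_zero]

lemma smallDeg_sum {α : Type*} {s : Finset α} {f : α → MvPolynomial (Fin r) ARing} {n : ℕ}
    (h : ∀ a ∈ s, SmallDeg (f a) n) : SmallDeg (∑ a ∈ s, f a) n := fun d hd => by
  rw [coeff_sum]
  exact Finset.sum_eq_zero fun a ha => h a ha d hd

lemma smallDeg_smul {p : MvPolynomial (Fin r) ARing} {n : ℕ} (c : ARing) (h : SmallDeg p n) :
    SmallDeg (c • p) n := fun d hd => by
  rw [coeff_smul, h d hd, smul_zero]

lemma smallDeg_monomial (d₀ : Fin r →₀ ℕ) (c : ARing) {n : ℕ} (h : (∑ i, d₀ i) < n) :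
    SmallDeg (monomial d₀ c) n := by
  intro d hd
  rw [coeff_monomial]
  split
  · next heq => exact absurd hd (by rw [← heq]; omega)
  · rfl

lemma smallDeg_mul {p q : MvPolynomial (Fin r) ARing} {m n : ℕ} (hp : SmallDeg p m)
    (hq : SmallDeg q n) : SmallDeg (p * q) (m + n - 1) := by
  intro d hd
  rw [coeff_mul]
  refine Finset.sum_eq_zero fun uv huv => ?_
  have hsum : uv.1 + uv.2 = d := Finset.HasAntidiagonal.mem_antidiagonal.1 huv
  have hdeg : (∑ i, uv.1 i) + (∑ i, uv.2 i) = ∑ i, d i := by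
    rw [← hsum]; simp [← Finset.sum_add_distrib]
  rcases (by omega : m ≤ ∑ i, uv.1 i ∨ n ≤ ∑ i, uv.2 i) with h | h
  · rw [hp _ h, zero_mul]
  · rw [hq _ h, mul_zero]

lemma sum_toF (β : Fin r → ℕ) : ∑ i, toF β i = ∑ i, β i := rfl

lemma smallDeg_gpoly (j : Fin r) (k : ℕ) :
    SmallDeg ((∏ t ∈ Finset.range k, (MvPolynomial.X j + MvPolynomial.C (aval t)))
      - MvPolynomial.X j ^ k) k := by
  induction k with
  | zero => simpa using smallDeg_zero (r := r) 0
  | succ k ih =>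
    have key : (∏ t ∈ Finset.range (k+1), (MvPolynomial.X j + MvPolynomial.C (aval t)))
        - MvPolynomial.X j ^ (k+1)
        = ((∏ t ∈ Finset.range k, (MvPolynomial.X j + MvPolynomial.C (aval t)))
            - MvPolynomial.X j ^ k) * (MvPolynomial.X j + MvPolynomial.C (aval k))
          + MvPolynomial.C (aval k) * MvPolynomial.X j ^ k := by
      rw [Finset.prod_range_succ]
      ring
    rw [key]
    refine smallDeg_add ?_ ?_
    · have h2 : SmallDeg (MvPolynomial.X (R := ARing) j + MvPolynomial.C (aval k)) 2 := by
        refine smallDeg_add ?_ ?_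
        · rw [X]
          exact smallDeg_monomial _ _ (by simp [Finsupp.single_apply])
        · rw [C_apply]
          exact smallDeg_monomial _ _ (by simp)
      have := smallDeg_mul ih h2
      exact smallDeg_mono this (by omega)
    · rw [C_mul_X_pow_eq_monomial]
      exact smallDeg_monomial _ _ (by simp [Finsupp.single_apply])

lemma smallDeg_dprod_sub (β : Fin r → ℕ) :
    SmallDeg (dprod β - monomial (toF β) 1) (∑ i, β i) := by
  suffices H : ∀ s : Finset (Fin r),
      SmallDeg ((∏ j ∈ s, ∏ t ∈ Finset.range (β j), (MvPolynomial.X j + MvPolynomial.C (aval t)))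
        - monomial (∑ j ∈ s, Finsupp.single j (β j)) 1) (∑ j ∈ s, β j) by
    have := H Finset.univ
    rwa [← toF_eq_sum_single] at this
  intro s
  induction s using Finset.induction with
  | empty => simpa using smallDeg_zero (r := r) 0
  | @insert a s ha ih =>
    rw [Finset.prod_insert ha, Finset.sum_insert ha, Finset.sum_insert ha]
    set g := ∏ t ∈ Finset.range (β a), (MvPolynomial.X (R := ARing) a + MvPolynomial.C (aval t))
    set P := ∏ j ∈ s, ∏ t ∈ Finset.range (β j),
      (MvPolynomial.X (R := ARing) j + MvPolynomial.C (aval t))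
    set M : MvPolynomial (Fin r) ARing := monomial (∑ j ∈ s, Finsupp.single j (β j)) 1
    have key : g * P - monomial (Finsupp.single a (β a) + ∑ j ∈ s, Finsupp.single j (β j)) 1
        = (g - MvPolynomial.X a ^ β a) * P + MvPolynomial.X a ^ β a * (P - M) := by
      have hM : MvPolynomial.X (R := ARing) a ^ β a * M
          = monomial (Finsupp.single a (β a) + ∑ j ∈ s, Finsupp.single j (β j)) 1 := by
        rw [X_pow_eq_monomial, monomial_mul, one_mul]
      rw [← hM]; ring
    rw [key]
    have hsmallP : SmallDeg P (∑ j ∈ s, β j + 1) := by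
      have : P = (P - M) + M := by ring
      rw [this]
      refine smallDeg_add (smallDeg_mono ih (by omega)) (smallDeg_monomial _ _ ?_)
      have : ∑ i, (∑ j ∈ s, Finsupp.single j (β j)) i = ∑ j ∈ s, β j := by
        simp only [Finset.sum_apply', Finsupp.single_apply]
        rw [Finset.sum_comm]
        exact Finset.sum_congr rfl fun j _ => by simp
      omega
    refine smallDeg_add ?_ ?_
    · have := smallDeg_mul (smallDeg_gpoly a (β a)) hsmallP
      exact smallDeg_mono this (by omega)
    · have hX : SmallDeg (MvPolynomial.X (R := ARing) a ^ β a) (β a + 1) := by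
        rw [X_pow_eq_monomial]
        exact smallDeg_monomial _ _ (by simp [Finsupp.single_apply])
      have := smallDeg_mul hX ih
      exact smallDeg_mono this (by omega)

lemma smallDeg_dmsym_sub (l : Fin r → ℕ) : SmallDeg (dmsym l - msym l) (∑ i, l i) := by
  rw [dmsym_eq, msym_eq, ← Finset.sum_sub_distrib]
  refine smallDeg_sum fun β hβ => ?_
  have h := smallDeg_dprod_sub β
  rwa [sum_of_mem_Orb hβ] at h

end Small

section Expand
variable {r : ℕ}

lemma coeff_orb_invariant {p : MvPolynomial (Fin r) ARing} (hp : p.IsSymmetric)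
    {l g : Fin r → ℕ} (h : g ∈ Orb l) : coeff (toF g) p = coeff (toF l) p := by
  obtain ⟨σ, rfl⟩ := mem_Orb.1 h
  have key : toF (l ∘ ⇑σ) = Finsupp.mapDomain ⇑σ⁻¹ (toF l) := by
    have := toF_comp_perm l σ⁻¹
    simpa using this
  rw [key]
  calc coeff (Finsupp.mapDomain ⇑σ⁻¹ (toF l)) p
      = coeff (Finsupp.mapDomain ⇑σ⁻¹ (toF l)) (rename ⇑σ⁻¹ p) := by rw [hp σ⁻¹]
    _ = coeff (toF l) p := coeff_rename_mapDomain _ (Equiv.injective _) _ _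

lemma coeff_msym_sortA {μ : Fin r → ℕ} (hμ : ∀ i j : Fin r, i ≤ j → μ j ≤ μ i)
    (g : Fin r → ℕ) : coeff (toF g) (msym μ) = if sortA g = μ then 1 else 0 := by
  rw [coeff_msym]
  congr 1
  simp only [eq_iff_iff]
  exact mem_Orb_iff_sortA hμ

open Classical in
/-- The partitions appearing in `p`'s support. -/
noncomputable def partSupp (p : MvPolynomial (Fin r) ARing) : Finset (Fin r → ℕ) :=
  (p.support.image (fun d : Fin r →₀ ℕ => (⇑d : Fin r → ℕ))).filter
    (fun μ => ∀ i j : Fin r, i ≤ j → μ j ≤ μ i)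

lemma partSupp_antitone {p : MvPolynomial (Fin r) ARing} {μ : Fin r → ℕ}
    (h : μ ∈ partSupp p) : ∀ i j : Fin r, i ≤ j → μ j ≤ μ i :=
  (Finset.mem_filter.1 h).2

lemma partSupp_coeff_ne_zero {p : MvPolynomial (Fin r) ARing} {μ : Fin r → ℕ}
    (h : μ ∈ partSupp p) : coeff (toF μ) p ≠ 0 := by
  obtain ⟨d, hd, hdμ⟩ := Finset.mem_image.1 (Finset.mem_filter.1 h).1
  have hh : toF μ = d := by rw [← hdμ, toF_coe]
  rw [hh]
  exact mem_support_iff.1 hd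

lemma symm_expand {p : MvPolynomial (Fin r) ARing} (hp : p.IsSymmetric) :
    p = ∑ μ ∈ partSupp p, coeff (toF μ) p • msym μ := by
  apply MvPolynomial.ext
  intro d
  rw [coeff_sum]
  have hterm : ∀ μ ∈ partSupp p, coeff d (coeff (toF μ) p • msym μ)
      = if sortA ⇑d = μ then coeff (toF μ) p else 0 := by
    intro μ hμ
    rw [coeff_smul, show d = toF ⇑d from (toF_coe d).symm,
      coeff_msym_sortA (partSupp_antitone hμ)]
    split <;> simp_all
  rw [Finset.sum_congr rfl hterm, Finset.sum_ite_eq (partSupp p) (sortA ⇑d)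
    (fun μ => coeff (toF μ) p)]
  have hco : coeff (toF (sortA ⇑d)) p = coeff d p := by
    have := coeff_orb_invariant hp (sortA_mem_Orb (⇑d))
    rwa [toF_coe] at this
  split
  · exact hco.symm
  · next hns =>
    by_contra hne
    apply hns
    refine Finset.mem_filter.2 ⟨?_, sortA_antitone _⟩
    refine Finset.mem_image.2 ⟨toF (sortA ⇑d), ?_, rfl⟩
    rw [mem_support_iff, hco]
    exact fun h => hne (h ▸ rfl)

lemma partSupp_sum_lt {p : MvPolynomial (Fin r) ARing} {n : ℕ} (hs : SmallDeg p n)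
    {μ : Fin r → ℕ} (h : μ ∈ partSupp p) : (∑ i, μ i) < n := by
  by_contra hle
  exact partSupp_coeff_ne_zero h (hs (toF μ) (by rw [sum_toF]; omega))

theorem unitriangular (r : ℕ) (l : Fin r → ℕ) (hl : ∀ i j : Fin r, i ≤ j → l j ≤ l i) :
    dmsym l - msym l ∈ Submodule.span ARing
      {q : MvPolynomial (Fin r) ARing | ∃ μ : Fin r → ℕ,
        (∀ i j : Fin r, i ≤ j → μ j ≤ μ i) ∧ (∑ i, μ i) < (∑ i, l i) ∧ q = msym μ} := by
  have hsym : (dmsym l - msym l).IsSymmetric := ((dmsym_symmetric l).sub (msym_symmetric l))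
  have hsmall := smallDeg_dmsym_sub l
  rw [symm_expand hsym]
  refine Submodule.sum_mem _ fun μ hμ => Submodule.smul_mem _ _ (Submodule.subset_span ?_)
  exact ⟨μ, partSupp_antitone hμ, partSupp_sum_lt hsmall hμ, rfl⟩

end Expand

set_option synthInstance.maxHeartbeats 1000000
set_option maxHeartbeats 8000000

section BasisPart
variable {r : ℕ}

/-- Index type: partitions with at most `r` parts. -/
abbrev Pt (r : ℕ) := {l : Fin r → ℕ // ∀ i j : Fin r, i ≤ j → l j ≤ l i}

/-- `msym` as an element of the symmetric subalgebra. -/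
noncomputable def me (μ : Pt r) : MvPolynomial.symmetricSubalgebra (Fin r) ARing :=
  ⟨msym μ.1, (mem_symmetricSubalgebra _).2 (msym_symmetric _)⟩

/-- `dmsym` as an element of the symmetric subalgebra. -/
noncomputable def de (μ : Pt r) : MvPolynomial.symmetricSubalgebra (Fin r) ARing :=
  ⟨dmsym μ.1, (mem_symmetricSubalgebra _).2 (dmsym_symmetric _)⟩

lemma coeff_dmsym_top (μ0 μ : Pt r) (hle : (∑ i, μ.1 i) ≤ ∑ i, μ0.1 i) :
    coeff (toF μ0.1) (dmsym μ.1) = if μ = μ0 then 1 else 0 := by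
  have h0 : coeff (toF μ0.1) (dmsym μ.1 - msym μ.1) = 0 :=
    smallDeg_dmsym_sub μ.1 _ (by rw [sum_toF]; omega)
  rw [coeff_sub, sub_eq_zero] at h0
  rw [h0, coeff_msym_sortA μ.2, sortA_eq_self μ0.2]
  congr 1
  simp only [eq_iff_iff]
  exact ⟨fun h => (Subtype.ext h.symm), fun h => by rw [h]⟩

lemma li_de : LinearIndependent ARing (de (r := r)) := by
  have hamb : LinearIndependent ARing (fun μ : Pt r => dmsym μ.1) := by
    rw [linearIndependent_iff']
    intro s g hsum
    by_contra hex
    push_neg at hex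
    obtain ⟨i0, hi0s, hi0⟩ := hex
    classical
    set s' := s.filter (fun μ => g μ ≠ 0) with hs'
    have hne : s'.Nonempty := ⟨i0, Finset.mem_filter.2 ⟨hi0s, hi0⟩⟩
    obtain ⟨μ0, hμ0s', hμ0⟩ := Finset.exists_mem_eq_sup (α := ℕ) s' hne (fun μ : Pt r => ∑ i, μ.1 i)
    have hμ0s : μ0 ∈ s := (Finset.mem_filter.1 hμ0s').1
    have hg0 : g μ0 ≠ 0 := (Finset.mem_filter.1 hμ0s').2
    have hco := congrArg (coeff (toF μ0.1)) hsum
    rw [coeff_sum, coeff_zero] at hco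
    rw [Finset.sum_eq_single_of_mem μ0 hμ0s ?side] at hco
    · rw [coeff_smul, coeff_dmsym_top μ0 μ0 le_rfl, if_pos rfl, smul_eq_mul, mul_one] at hco
      exact hg0 hco
    · intro b hbs hbne
      rw [coeff_smul]
      by_cases hgb : g b = 0
      · rw [hgb, zero_smul]
      · have hbs' : b ∈ s' := Finset.mem_filter.2 ⟨hbs, hgb⟩
        have hble : (∑ i, b.1 i) ≤ ∑ i, μ0.1 i := by
          rw [← hμ0]
          exact Finset.le_sup (f := fun μ : Pt r => ∑ i, μ.1 i) hbs'
        rw [coeff_dmsym_top μ0 b hble, if_neg hbne, smul_zero]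
  exact hamb.of_comp (Subalgebra.val _).toLinearMap

lemma me_mem_span_de (μ : Pt r) :
    me μ ∈ Submodule.span ARing (Set.range (de (r := r))) := by
  have hιinj : Function.Injective
      ⇑((Subalgebra.val (MvPolynomial.symmetricSubalgebra (Fin r) ARing)).toLinearMap) :=
    Subtype.coe_injective
  suffices H : ∀ n, ∀ μ : Pt r, (∑ i, μ.1 i) ≤ n →
      me μ ∈ Submodule.span ARing (Set.range (de (r := r))) from H _ μ le_rfl
  intro n
  induction n using Nat.strong_induction_on with
  | _ n IH =>
    intro μ hμn
    set ι := (Subalgebra.val (MvPolynomial.symmetricSubalgebra (Fin r) ARing)).toLinearMap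
      with hι
    have h1 := unitriangular r μ.1 μ.2
    have h2 : Submodule.span ARing
        {q : MvPolynomial (Fin r) ARing | ∃ ν : Fin r → ℕ,
          (∀ i j : Fin r, i ≤ j → ν j ≤ ν i) ∧ (∑ i, ν i) < (∑ i, μ.1 i) ∧ q = msym ν}
        ≤ Submodule.map ι (Submodule.span ARing (Set.range (de (r := r)))) := by
      rw [Submodule.span_le]
      rintro q ⟨ν, hanti, hlt, rfl⟩
      have hνn : (∑ i, ν i) < n := by omega
      exact ⟨me ⟨ν, hanti⟩, IH (∑ i, ν i) hνn ⟨ν, hanti⟩ le_rfl, rfl⟩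
    have h3 : dmsym μ.1 - msym μ.1 ∈
        Submodule.map ι (Submodule.span ARing (Set.range (de (r := r)))) := h2 h1
    obtain ⟨y, hyW, hy⟩ := Submodule.mem_map.1 h3
    have hcoe : ι (de μ - me μ) = dmsym μ.1 - msym μ.1 :=
      AddSubgroupClass.coe_sub (de μ) (me μ)
    have hy2 : y = de μ - me μ := hιinj (hy.trans hcoe.symm)
    rw [hy2] at hyW
    have hme : me μ = de μ - (de μ - me μ) := (sub_sub_cancel (de μ) (me μ)).symm
    rw [hme]
    exact Submodule.sub_mem (Submodule.span ARing (Set.range (de (r := r))))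
      (Submodule.subset_span (Set.mem_range_self μ)) hyW

lemma span_de_top : ⊤ ≤ Submodule.span ARing (Set.range (de (r := r))) := by
  intro x _
  have hx : (↑x : MvPolynomial (Fin r) ARing).IsSymmetric :=
    (mem_symmetricSubalgebra _).1 x.2
  have hexp := symm_expand hx
  have hxeq : x = ∑ μ ∈ (partSupp (↑x : MvPolynomial (Fin r) ARing)).attach,
      (coeff (toF μ.1) (↑x : MvPolynomial (Fin r) ARing)) •
        me ⟨μ.1, partSupp_antitone μ.2⟩ := by
    apply Subtype.ext
    push_cast
    conv_lhs => rw [hexp]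
    exact (Finset.sum_attach _
      (fun μ => coeff (toF μ) (↑x : MvPolynomial (Fin r) ARing) • msym μ)).symm
  rw [hxeq]
  exact Submodule.sum_mem _ fun μ _ =>
    Submodule.smul_mem _ _ (me_mem_span_de _)

end BasisPart


set_option synthInstance.maxHeartbeats 1000000 in
/-- The functions `m_λ(ξ|a)` are related to the `m_λ(ξ)` by a unitriangular (with
respect to degree) change of basis, and they form a basis, over `R = ℤ[a]`, of the
`R`-module of symmetric polynomials in `ξ_1, …, ξ_r`, indexed by partitions with at
most `r` parts. -/
theorem double_monomial_basis (r : ℕ) :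
    (∀ l : Fin r → ℕ, (∀ i j : Fin r, i ≤ j → l j ≤ l i) →
      dmsym l - msym l ∈ Submodule.span ARing
        {q : MvPolynomial (Fin r) ARing | ∃ μ : Fin r → ℕ,
          (∀ i j : Fin r, i ≤ j → μ j ≤ μ i) ∧ (∑ i, μ i) < (∑ i, l i) ∧ q = msym μ}) ∧
    ∃ B : Module.Basis {l : Fin r → ℕ // ∀ i j : Fin r, i ≤ j → l j ≤ l i} ARing
        (MvPolynomial.symmetricSubalgebra (Fin r) ARing),
      ∀ p, (B p : MvPolynomial (Fin r) ARing) = dmsym p.1 := by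
  refine ⟨fun l hl => unitriangular r l hl, ⟨Module.Basis.mk li_de span_de_top, fun p => ?_⟩⟩
  rw [Module.Basis.mk_apply]
  rfl
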